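/- Let M be a finite metric space on n points, let N_1,…,N_k be finite ultrametric spaces, let φ_i : M → N_i be maps with d_{N_i}(φ_i(u), φ_i(v)) ≥ d_M(u,v) for all u,v ∈ M and all i (non-contractive embeddings), and let p_1,…,p_k ≥ 0 with Σ_i p_i = 1 be such that Σ_i p_i · d_{N_i}(φ_i(u), φ_i(v)) ≤ α·d_M(u,v) for all u,v ∈ M. Then there exist a finite ultrametric space N with |N| ≤ k·n and a surjective non-contractive multi-embedding f : N → M with path distortion at most α. -/

import Mathlib

/-- An ultrametric space: the distance satisfies the strong triangle inequality. -/
def IsUltrametricSpace (X : Type*) [MetricSpace X] : Prop :=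
  ∀ x y z : X, dist x z ≤ max (dist x y) (dist y z)

/-- A multi-embedding `f : N → M` (a surjective map) is non-contractive if
distances in `N` dominate the distances of the images in `M`. -/
def NonContractive {N M : Type*} [MetricSpace N] [MetricSpace M] (f : N → M) : Prop :=
  ∀ u v : N, dist (f u) (f v) ≤ dist u v

/-- The length of a path (finite sequence of points) in a metric space. -/
noncomputable def pathLength {X : Type*} [MetricSpace X] (p : List X) : ℝ :=
  (List.zipWith dist p p.tail).sum

/-- A non-contractive multi-embedding `f : N → M` has path distortion at most `α`. -/
def PathDistortionLE {N M : Type*} [MetricSpace N] [MetricSpace M] (f : N → M) (α : ℝ) : Prop :=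
  ∀ p : List M, ∃ p' : List N, p'.map f = p ∧ pathLength p' ≤ α * pathLength p

private lemma tail_map' {α β : Type*} (g : α → β) (l : List α) :
    (l.map g).tail = l.tail.map g := by
  cases l <;> simp

private lemma avg_list_le {M : Type*} {k : ℕ} (p : Fin k → ℝ) (α : ℝ)
    (F : Fin k → M → M → ℝ) (G : M → M → ℝ)
    (h : ∀ a b, ∑ i, p i * F i a b ≤ α * G a b) (l l' : List M) :
    ∑ i, (List.zipWith (F i) l l').sum * p i ≤ α * (List.zipWith G l l').sum := by
  induction l generalizing l' with
  | nil => simp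
  | cons a t ih =>
    cases l' with
    | nil => simp
    | cons b t' =>
      simp only [List.zipWith_cons_cons, List.sum_cons, add_mul, mul_add,
        Finset.sum_add_distrib]
      refine add_le_add ?_ (ih t')
      simpa only [mul_comm] using h a b

/-- A finitely-supported `α`-probabilistic embedding of a finite metric space `M` on `n`
points into ultrametrics `N_1,…,N_k` (non-contractive embeddings `φ_i : M → N_i` and
weights `p_i` summing to `1` whose expected distance expands each distance by at most a
factor `α`) yields a surjective non-contractive multi-embedding of `M` into a single
finite ultrametric space of cardinality at most `k·n` with path distortion at most `α`. -/
theorem multiEmbedding_of_probabilistic_embedding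
    (M : Type*) [MetricSpace M] [Fintype M] (n : ℕ) (hn : Fintype.card M = n)
    (k : ℕ) (Nfam : Fin k → Type) [∀ i, MetricSpace (Nfam i)] [∀ i, Fintype (Nfam i)]
    (hUfam : ∀ i, IsUltrametricSpace (Nfam i))
    (φ : ∀ i, M → Nfam i)
    (hφ : ∀ (i : Fin k) (u v : M), dist u v ≤ dist (φ i u) (φ i v))
    (p : Fin k → ℝ) (hp : ∀ i, 0 ≤ p i) (hpsum : ∑ i, p i = 1)
    (α : ℝ)
    (hexp : ∀ u v : M, ∑ i, p i * dist (φ i u) (φ i v) ≤ α * dist u v) :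
    ∃ (N : Type) (_ : MetricSpace N) (_ : Fintype N) (f : N → M),
      IsUltrametricSpace N ∧
      Fintype.card N ≤ k * n ∧
      Function.Surjective f ∧
      NonContractive f ∧
      PathDistortionLE f α := by
  -- `k` is positive since the weights sum to 1.
  have hk : 0 < k := by
    by_contra h
    interval_cases k
    simp at hpsum
  -- identification of `M` with `Fin n`
  let e : M ≃ Fin n := Fintype.equivFinOfCardEq hn
  -- a bound dominating all distances in the ultrametrics
  set D : ℝ := 1 + ∑ i, ∑ q : M × M, dist (φ i q.1) (φ i q.2) with hD
  have hDsum_nonneg : ∀ i ∈ (Finset.univ : Finset (Fin k)),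
      0 ≤ ∑ q : M × M, dist (φ i q.1) (φ i q.2) := by
    intro i _
    exact Finset.sum_nonneg fun q _ => dist_nonneg
  have hD1 : (1 : ℝ) ≤ D := by
    have := Finset.sum_nonneg hDsum_nonneg
    simp only [hD]; linarith
  have hD0 : (0 : ℝ) < D := lt_of_lt_of_le one_pos hD1
  have hDle : ∀ (i : Fin k) (u v : M), dist (φ i u) (φ i v) ≤ D := by
    intro i u v
    have h1 : dist (φ i u) (φ i v) ≤ ∑ q : M × M, dist (φ i q.1) (φ i q.2) := by
      have := Finset.single_le_sum (f := fun q : M × M => dist (φ i q.1) (φ i q.2))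
        (fun q _ => dist_nonneg) (Finset.mem_univ (u, v))
      simpa using this
    have h2 : ∑ q : M × M, dist (φ i q.1) (φ i q.2) ≤ D := by
      have := Finset.single_le_sum hDsum_nonneg (Finset.mem_univ i)
      simp only [hD]; linarith
    linarith
  -- the distance function on `Fin k × Fin n`
  set d : Fin k × Fin n → Fin k × Fin n → ℝ := fun x y =>
    if x.1 = y.1 then dist (φ x.1 (e.symm x.2)) (φ x.1 (e.symm y.2)) else D with hd
  have hd_nonneg : ∀ x y, 0 ≤ d x y := by
    intro x y
    simp only [hd]
    split
    · exact dist_nonneg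
    · exact le_of_lt hD0
  have hd_comm : ∀ x y, d x y = d y x := by
    intro ⟨i, a⟩ ⟨j, b⟩
    simp only [hd]
    by_cases h : i = j
    · subst h; simp [dist_comm]
    · simp [h, Ne.symm h]
  have hd_ultra : ∀ x y z, d x z ≤ max (d x y) (d y z) := by
    intro ⟨i, a⟩ ⟨j, b⟩ ⟨l, c⟩
    by_cases hil : i = l
    · subst hil
      by_cases hij : i = j
      · subst hij
        simp only [hd, if_pos rfl]
        exact hUfam i _ _ _
      · have h1 : d (i, a) (j, b) = D := by simp [hd, hij]
        have h2 : d (i, a) (i, c) ≤ D := by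
          simp only [hd, if_pos rfl]; exact hDle _ _ _
        rw [h1]
        exact le_max_of_le_left h2
    · have h1 : d (i, a) (l, c) = D := by simp [hd, hil]
      rw [h1]
      by_cases hij : i = j
      · subst hij
        have : d (i, b) (l, c) = D := by simp [hd, hil]
        rw [this]; exact le_max_right _ _
      · have : d (i, a) (j, b) = D := by simp [hd, hij]
        rw [this]; exact le_max_left _ _
  have hd_eq : ∀ x y, d x y = 0 → x = y := by
    intro ⟨i, a⟩ ⟨j, b⟩ h
    simp only [hd] at h
    by_cases hij : i = j
    · subst hij
      simp only [if_true, if_pos] at h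
      have h2 : dist (e.symm a) (e.symm b) ≤ 0 := by
        have := hφ i (e.symm a) (e.symm b); linarith
      have h3 : e.symm a = e.symm b := dist_le_zero.mp h2
      have : a = b := e.symm.injective h3
      simp [this]
    · rw [if_neg hij] at h
      exact absurd h (ne_of_gt hD0)
  letI instN : MetricSpace (Fin k × Fin n) :=
    { dist := d
      dist_self := fun x => by
        simp only [hd, if_pos rfl, dist_self]
      dist_comm := hd_comm
      dist_triangle := fun x y z => by
        refine (hd_ultra x y z).trans (max_le ?_ ?_)
        · exact le_add_of_nonneg_right (hd_nonneg y z)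
        · exact le_add_of_nonneg_left (hd_nonneg x y)
      eq_of_dist_eq_zero := fun {x y} h => hd_eq x y h }
  have hdist_def : ∀ x y : Fin k × Fin n, dist x y = d x y := fun _ _ => rfl
  refine ⟨Fin k × Fin n, instN, inferInstance, fun x => e.symm x.2, ?_, ?_, ?_, ?_, ?_⟩
  · -- ultrametric
    intro x y z
    simpa only [hdist_def] using hd_ultra x y z
  · -- cardinality
    simp
  · -- surjective
    intro u
    exact ⟨(⟨0, hk⟩, e u), by simp⟩
  · -- non-contractive
    intro ⟨i, a⟩ ⟨j, b⟩
    rw [hdist_def]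
    simp only [hd]
    by_cases hij : i = j
    · simpa [hij] using hφ i (e.symm a) (e.symm b)
    · rw [if_neg hij]
      exact (hφ i (e.symm a) (e.symm b)).trans (hDle i _ _)
  · -- path distortion
    intro q
    -- for each i, the lift of q into copy i
    have key : ∃ i : Fin k,
        (List.zipWith (fun a b => dist (φ i a) (φ i b)) q q.tail).sum
          ≤ α * pathLength q := by
      by_contra hcon
      push_neg at hcon
      have havg : ∑ i, (List.zipWith (fun a b => dist (φ i a) (φ i b)) q q.tail).sum * p i
          ≤ α * pathLength q := by
        unfold pathLength
        exact avg_list_le p α (fun i a b => dist (φ i a) (φ i b)) dist hexp q q.tail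
      have hlt : α * pathLength q
          < ∑ i, (List.zipWith (fun a b => dist (φ i a) (φ i b)) q q.tail).sum * p i := by
        have hone : ∑ i, (α * pathLength q) * p i = α * pathLength q := by
          rw [← Finset.mul_sum, hpsum, mul_one]
        rw [← hone]
        obtain ⟨i0, hi0⟩ : ∃ i0, 0 < p i0 := by
          by_contra hc
          push_neg at hc
          have : ∑ i, p i ≤ 0 := Finset.sum_nonpos fun i _ => hc i
          rw [hpsum] at this; linarith
        refine Finset.sum_lt_sum (fun i _ => ?_) ⟨i0, Finset.mem_univ i0, ?_⟩
        · exact mul_le_mul_of_nonneg_right (le_of_lt (hcon i)) (hp i)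
        · exact mul_lt_mul_of_pos_right (hcon i0) hi0
      linarith
    obtain ⟨i, hi⟩ := key
    refine ⟨q.map (fun u => (i, e u)), ?_, ?_⟩
    · rw [List.map_map]
      simp [Function.comp_def]
    · unfold pathLength
      rw [tail_map', List.zipWith_map]
      have hfun : (fun a b => dist ((i, e a) : Fin k × Fin n) ((i, e b) : Fin k × Fin n))
          = fun a b => dist (φ i a) (φ i b) := by
        funext a b
        rw [hdist_def]
        simp [hd]
      rw [hfun]
      exact hi
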